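/- On X = Q[ã_i, b̃_i] ⊗ Λ[a_i, b_i], let Δ = Σ_j ∂_{b_j}∂_{a_j} and h = Σ_j (a_j ∂_{ã_j} + b_j ∂_{b̃_j}). Then the commutator [h, Δ] equals Σ_j (∂_{a_j}∂_{b̃_j} − ∂_{b_j}∂_{ã_j}), and consequently [[h,Δ],Δ] = 0, i.e., Δ h Δ = (1/2)(Δ² h + h Δ²). -/
import Mathlib


/-! A concrete model of the bigraded algebra
`X = ℚ[ã_1,…,ã_g,b̃_1,…,b̃_g] ⊗ Λ[a_1,…,a_g,b_1,…,b_g]`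
with its monomial basis, together with the operators
`δ = Σ_j (ã_j ∂_{a_j} + b̃_j ∂_{b_j})`, `h = Σ_j (a_j ∂_{ã_j} + b_j ∂_{b̃_j})` and
`Δ = Σ_j ∂_{b_j} ∂_{a_j}`.  Exterior monomials are ordered `a_1 < ⋯ < a_g < b_1 < ⋯ < b_g`
and the graded partial derivatives carry the corresponding Koszul signs. -/

/-- A monomial of `X`: exponents of the polynomial generators `ã_j`, `b̃_j` and the
sets of exterior generators `a_j`, `b_j` occurring. -/
structure Mon (g : ℕ) where
  ea : Fin g → ℕ
  eb : Fin g → ℕ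
  sa : Finset (Fin g)
  sb : Finset (Fin g)
deriving DecidableEq

/-- The underlying vector space of `X`, with basis the monomials. -/
abbrev XAlg (g : ℕ) := Mon g →₀ ℚ

noncomputable section

namespace Mon

/-- Basis vector corresponding to a monomial. -/
def bas {g : ℕ} (m : Mon g) : XAlg g := Finsupp.single m 1

/-- Extend a map on monomials to a linear endomorphism of `X`. -/
def lift1 {g : ℕ} (f : Mon g → XAlg g) : XAlg g →ₗ[ℚ] XAlg g :=
  Finsupp.lift (XAlg g) ℚ (Mon g) f

/-- Koszul sign for (removing or inserting) `a_j` in the exterior monomial with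
`a`-part `A`. -/
def sgnA {g : ℕ} (A : Finset (Fin g)) (j : Fin g) : ℚ :=
  (-1 : ℚ) ^ (A.filter (fun i => i < j)).card

/-- Koszul sign for (removing or inserting) `b_j` in the exterior monomial with
`a`-part `A` and `b`-part `B`. -/
def sgnB {g : ℕ} (A B : Finset (Fin g)) (j : Fin g) : ℚ :=
  (-1 : ℚ) ^ (A.card + (B.filter (fun i => i < j)).card)

/-- The odd partial derivative `∂_{a_j}`. -/
def dA {g : ℕ} (j : Fin g) : XAlg g →ₗ[ℚ] XAlg g :=
  lift1 (fun m => if j ∈ m.sa then sgnA m.sa j • bas ⟨m.ea, m.eb, m.sa.erase j, m.sb⟩ else 0)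

/-- The odd partial derivative `∂_{b_j}`. -/
def dB {g : ℕ} (j : Fin g) : XAlg g →ₗ[ℚ] XAlg g :=
  lift1 (fun m => if j ∈ m.sb then sgnB m.sa m.sb j • bas ⟨m.ea, m.eb, m.sa, m.sb.erase j⟩ else 0)

/-- Multiplication by `a_j`. -/
def mA {g : ℕ} (j : Fin g) : XAlg g →ₗ[ℚ] XAlg g :=
  lift1 (fun m => if j ∈ m.sa then 0 else sgnA m.sa j • bas ⟨m.ea, m.eb, insert j m.sa, m.sb⟩)

/-- Multiplication by `b_j`. -/
def mB {g : ℕ} (j : Fin g) : XAlg g →ₗ[ℚ] XAlg g :=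
  lift1 (fun m => if j ∈ m.sb then 0 else sgnB m.sa m.sb j • bas ⟨m.ea, m.eb, m.sa, insert j m.sb⟩)

/-- Multiplication by `ã_j`. -/
def mtA {g : ℕ} (j : Fin g) : XAlg g →ₗ[ℚ] XAlg g :=
  lift1 (fun m => bas ⟨Function.update m.ea j (m.ea j + 1), m.eb, m.sa, m.sb⟩)

/-- Multiplication by `b̃_j`. -/
def mtB {g : ℕ} (j : Fin g) : XAlg g →ₗ[ℚ] XAlg g :=
  lift1 (fun m => bas ⟨m.ea, Function.update m.eb j (m.eb j + 1), m.sa, m.sb⟩)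

/-- The (even) partial derivative `∂_{ã_j}`. -/
def dtA {g : ℕ} (j : Fin g) : XAlg g →ₗ[ℚ] XAlg g :=
  lift1 (fun m => (m.ea j : ℚ) • bas ⟨Function.update m.ea j (m.ea j - 1), m.eb, m.sa, m.sb⟩)

/-- The (even) partial derivative `∂_{b̃_j}`. -/
def dtB {g : ℕ} (j : Fin g) : XAlg g →ₗ[ℚ] XAlg g :=
  lift1 (fun m => (m.eb j : ℚ) • bas ⟨m.ea, Function.update m.eb j (m.eb j - 1), m.sa, m.sb⟩)

/-- The operator `δ = Σ_j (ã_j ∂_{a_j} + b̃_j ∂_{b_j})`. -/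
def δop (g : ℕ) : XAlg g →ₗ[ℚ] XAlg g :=
  ∑ j : Fin g, (mtA j ∘ₗ dA j + mtB j ∘ₗ dB j)

/-- The operator `h = Σ_j (a_j ∂_{ã_j} + b_j ∂_{b̃_j})`. -/
def hop (g : ℕ) : XAlg g →ₗ[ℚ] XAlg g :=
  ∑ j : Fin g, (mA j ∘ₗ dtA j + mB j ∘ₗ dtB j)

/-- The operator `Δ = Σ_j ∂_{b_j} ∂_{a_j}`. -/
def Δop (g : ℕ) : XAlg g →ₗ[ℚ] XAlg g :=
  ∑ j : Fin g, dB j ∘ₗ dA j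

/-- The total polynomial degree of a monomial (the number of generators occurring,
counted with multiplicity). -/
def polyDeg {g : ℕ} (m : Mon g) : ℕ :=
  (∑ j, m.ea j) + (∑ j, m.eb j) + m.sa.card + m.sb.card

/-- The homological degree of a monomial (`|ã_j| = |b̃_j| = 2`, `|a_j| = |b_j| = 1`). -/
def homDeg {g : ℕ} (m : Mon g) : ℕ :=
  2 * ((∑ j, m.ea j) + (∑ j, m.eb j)) + m.sa.card + m.sb.card

/-- The constant monomial `1`. -/
def one (g : ℕ) : Mon g := ⟨fun _ => 0, fun _ => 0, ∅, ∅⟩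

end Mon
end

namespace Mon
variable {g : ℕ}

/-! ### Basic infrastructure -/

lemma lift1_bas (f : Mon g → XAlg g) (m : Mon g) : lift1 f (bas m) = f m := by
  simp [lift1, bas]

lemma ext_bas {f h : XAlg g →ₗ[ℚ] XAlg g} (H : ∀ m, f (bas m) = h (bas m)) : f = h := by
  apply Finsupp.lhom_ext' (fun m => ?_)
  apply LinearMap.ext_ring
  simpa [bas] using H m

@[simp] lemma dA_bas (j : Fin g) (m : Mon g) :
    dA j (bas m) = if j ∈ m.sa then sgnA m.sa j • bas ⟨m.ea, m.eb, m.sa.erase j, m.sb⟩ else 0 :=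
  lift1_bas _ _
@[simp] lemma dB_bas (j : Fin g) (m : Mon g) :
    dB j (bas m) = if j ∈ m.sb then sgnB m.sa m.sb j • bas ⟨m.ea, m.eb, m.sa, m.sb.erase j⟩ else 0 :=
  lift1_bas _ _
@[simp] lemma mA_bas (j : Fin g) (m : Mon g) :
    mA j (bas m) = if j ∈ m.sa then 0 else sgnA m.sa j • bas ⟨m.ea, m.eb, insert j m.sa, m.sb⟩ :=
  lift1_bas _ _
@[simp] lemma mB_bas (j : Fin g) (m : Mon g) :
    mB j (bas m) = if j ∈ m.sb then 0 else sgnB m.sa m.sb j • bas ⟨m.ea, m.eb, m.sa, insert j m.sb⟩ :=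
  lift1_bas _ _
@[simp] lemma dtA_bas (j : Fin g) (m : Mon g) :
    dtA j (bas m) = (m.ea j : ℚ) • bas ⟨Function.update m.ea j (m.ea j - 1), m.eb, m.sa, m.sb⟩ :=
  lift1_bas _ _
@[simp] lemma dtB_bas (j : Fin g) (m : Mon g) :
    dtB j (bas m) = (m.eb j : ℚ) • bas ⟨m.ea, Function.update m.eb j (m.eb j - 1), m.sa, m.sb⟩ :=
  lift1_bas _ _

/-! ### Sign lemmas -/

lemma sgnB_eq (A B : Finset (Fin g)) (j : Fin g) :
    sgnB A B j = (-1 : ℚ) ^ A.card * sgnA B j := by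
  rw [sgnB, sgnA, pow_add]

lemma sgnA_erase_self (A : Finset (Fin g)) (j : Fin g) :
    sgnA (A.erase j) j = sgnA A j := by
  unfold sgnA
  congr 2
  ext i
  simp only [Finset.mem_filter, Finset.mem_erase]
  constructor
  · rintro ⟨⟨_, hi⟩, h⟩; exact ⟨hi, h⟩
  · rintro ⟨hi, h⟩; exact ⟨⟨fun e => absurd (e ▸ h) (lt_irrefl j), hi⟩, h⟩

lemma sgnA_insert_self (A : Finset (Fin g)) (j : Fin g) :
    sgnA (insert j A) j = sgnA A j := by
  unfold sgnA
  congr 2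
  ext i
  simp only [Finset.mem_filter, Finset.mem_insert]
  constructor
  · rintro ⟨hi | hi, h⟩
    · exact absurd (hi ▸ h) (lt_irrefl j)
    · exact ⟨hi, h⟩
  · rintro ⟨hi, h⟩; exact ⟨Or.inr hi, h⟩

lemma sgnA_mul_self (A : Finset (Fin g)) (j : Fin g) : sgnA A j * sgnA A j = 1 := by
  unfold sgnA
  rw [← pow_add, Even.neg_one_pow ⟨_, rfl⟩]

lemma sgnB_mul_sgnB (A B C : Finset (Fin g)) (j k : Fin g) :
    sgnB A B j * sgnB A C k = sgnA B j * sgnA C k := by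
  rw [sgnB_eq, sgnB_eq, mul_mul_mul_comm, ← pow_add, Even.neg_one_pow ⟨_, rfl⟩, one_mul]

lemma sgnA_insert (A : Finset (Fin g)) {j k : Fin g} (hk : k ∉ A) (hjk : k ≠ j) :
    sgnA (insert k A) j = (if k < j then -1 else 1) * sgnA A j := by
  unfold sgnA
  rw [Finset.filter_insert]
  split_ifs with h
  · rw [Finset.card_insert_of_notMem (fun hc => hk (Finset.mem_filter.1 hc).1), pow_succ]
    ring
  · rw [one_mul]

lemma sgnA_erase (A : Finset (Fin g)) {j k : Fin g} (hk : k ∈ A) (hjk : k ≠ j) :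
    sgnA (A.erase k) j = (if k < j then -1 else 1) * sgnA A j := by
  unfold sgnA
  rw [Finset.filter_erase]
  split_ifs with h
  · have hm : k ∈ A.filter (fun i => i < j) := Finset.mem_filter.2 ⟨hk, h⟩
    rw [Finset.card_erase_of_mem hm]
    obtain ⟨n, hn⟩ : ∃ n, (A.filter (fun i => i < j)).card = n + 1 :=
      ⟨_, (Nat.succ_pred_eq_of_pos (Finset.card_pos.2 ⟨k, hm⟩)).symm⟩
    rw [hn]
    simp [pow_succ]
  · have he : k ∉ A.filter (fun i => i < j) := fun hc => h (Finset.mem_filter.1 hc).2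
    rw [Finset.erase_eq_of_notMem he, one_mul]

lemma sgnB_insert_left (A B : Finset (Fin g)) {k : Fin g} (hk : k ∉ A) (j : Fin g) :
    sgnB (insert k A) B j = -sgnB A B j := by
  rw [sgnB_eq, sgnB_eq, Finset.card_insert_of_notMem hk, pow_succ]
  ring

lemma sgnB_erase_left (A B : Finset (Fin g)) {k : Fin g} (hk : k ∈ A) (j : Fin g) :
    sgnB (A.erase k) B j = -sgnB A B j := by
  rw [sgnB_eq, sgnB_eq, Finset.card_erase_of_mem hk]
  obtain ⟨n, hn⟩ : ∃ n, A.card = n + 1 :=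
    ⟨_, (Nat.succ_pred_eq_of_pos (Finset.card_pos.2 ⟨k, hk⟩)).symm⟩
  rw [hn]
  simp [pow_succ]
  try ring

lemma sgn_cross {j k : Fin g} (hjk : j ≠ k) (s t : ℚ) :
    t * ((if k < j then (-1:ℚ) else 1) * s) + s * ((if j < k then (-1:ℚ) else 1) * t) = 0 := by
  rcases lt_or_gt_of_ne hjk with h | h
  · rw [if_neg (asymm h), if_pos h]; ring
  · rw [if_pos h, if_neg (asymm h)]; ring

end Mon

namespace Mon
variable {g : ℕ}

/-! ### The canonical (anti)commutation relations -/

lemma dA_mA (j k : Fin g) :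
    (dA j * mA k + mA k * dA j : Module.End ℚ (XAlg g)) = if j = k then 1 else 0 := by
  apply ext_bas (fun m => ?_)
  obtain ⟨ea, eb, A, B⟩ := m
  simp only [LinearMap.add_apply, Module.End.mul_apply, dA_bas, mA_bas]
  by_cases hjk : j = k
  · subst hjk
    rw [if_pos rfl]
    by_cases hj : j ∈ A
    · simp only [if_pos hj, map_zero, map_smul, mA_bas, zero_add]
      rw [if_neg (Finset.notMem_erase j A), Finset.insert_erase hj, sgnA_erase_self,
        smul_smul, sgnA_mul_self, one_smul, Module.End.one_apply]
    · simp only [if_neg hj, map_zero, map_smul, dA_bas, add_zero]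
      rw [if_pos (Finset.mem_insert_self j A), Finset.erase_insert hj, sgnA_insert_self,
        smul_smul, sgnA_mul_self, one_smul, Module.End.one_apply]
  · rw [if_neg hjk]
    have hkj : k ≠ j := Ne.symm hjk
    by_cases hk : k ∈ A
    · simp only [if_pos hk, map_zero, zero_add, LinearMap.zero_apply]
      by_cases hj : j ∈ A
      · simp [Finset.mem_erase, hkj, hk, if_pos hj]
      · simp [if_neg hj]
    · simp only [if_neg hk, map_smul, dA_bas, LinearMap.zero_apply]
      by_cases hj : j ∈ A
      · have hji : j ∈ insert k A := Finset.mem_insert_of_mem hj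
        simp only [if_pos hji, if_pos hj, map_smul, mA_bas]
        have hkje : k ∉ A.erase j := fun hc => hk (Finset.mem_of_mem_erase hc)
        simp only [if_neg hkje, smul_smul]
        rw [Finset.erase_insert_of_ne (Ne.symm hjk)]
        rw [sgnA_insert A hk hkj, sgnA_erase A hj hjk, ← add_smul, sgn_cross hjk, zero_smul]
      · have hji : j ∉ insert k A := by simp [hjk, hj]
        rw [if_neg hji, if_neg hj]; simp

lemma dB_mB (j k : Fin g) :
    (dB j * mB k + mB k * dB j : Module.End ℚ (XAlg g)) = if j = k then 1 else 0 := by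
  apply ext_bas (fun m => ?_)
  obtain ⟨ea, eb, A, B⟩ := m
  simp only [LinearMap.add_apply, Module.End.mul_apply, dB_bas, mB_bas]
  by_cases hjk : j = k
  · subst hjk
    rw [if_pos rfl]
    by_cases hj : j ∈ B
    · simp only [if_pos hj, map_zero, map_smul, mB_bas, zero_add]
      rw [if_neg (Finset.notMem_erase j B), Finset.insert_erase hj,
        smul_smul, sgnB_mul_sgnB, sgnA_erase_self, sgnA_mul_self, one_smul, Module.End.one_apply]
    · simp only [if_neg hj, map_zero, map_smul, dB_bas, add_zero]
      rw [if_pos (Finset.mem_insert_self j B), Finset.erase_insert hj,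
        smul_smul, sgnB_mul_sgnB, sgnA_insert_self, sgnA_mul_self, one_smul, Module.End.one_apply]
  · rw [if_neg hjk]
    have hkj : k ≠ j := Ne.symm hjk
    by_cases hk : k ∈ B
    · simp only [if_pos hk, map_zero, zero_add, LinearMap.zero_apply]
      by_cases hj : j ∈ B
      · simp [Finset.mem_erase, hkj, hk, if_pos hj]
      · simp [if_neg hj]
    · simp only [if_neg hk, map_smul, dB_bas, LinearMap.zero_apply]
      by_cases hj : j ∈ B
      · have hji : j ∈ insert k B := Finset.mem_insert_of_mem hj
        simp only [if_pos hji, if_pos hj, map_smul, mB_bas]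
        have hkje : k ∉ B.erase j := fun hc => hk (Finset.mem_of_mem_erase hc)
        simp only [if_neg hkje, smul_smul]
        rw [Finset.erase_insert_of_ne (Ne.symm hjk)]
        rw [sgnB_mul_sgnB, sgnB_mul_sgnB, sgnA_insert B hk hkj, sgnA_erase B hj hjk,
          ← add_smul, sgn_cross hjk, zero_smul]
      · have hji : j ∉ insert k B := by simp [hjk, hj]
        rw [if_neg hji, if_neg hj]; simp

lemma dB_mA (j k : Fin g) :
    (dB j * mA k + mA k * dB j : Module.End ℚ (XAlg g)) = 0 := by
  apply ext_bas (fun m => ?_)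
  obtain ⟨ea, eb, A, B⟩ := m
  simp only [LinearMap.add_apply, Module.End.mul_apply, dB_bas, mA_bas, LinearMap.zero_apply]
  by_cases hk : k ∈ A
  · simp only [if_pos hk, map_zero, zero_add]
    by_cases hj : j ∈ B
    · simp [if_pos hj, hk]
    · simp [if_neg hj]
  · simp only [if_neg hk, map_smul, dB_bas]
    by_cases hj : j ∈ B
    · simp only [if_pos hj, map_smul, mA_bas, if_neg hk, smul_smul]
      rw [sgnB_insert_left A B hk j, ← add_smul]
      convert zero_smul ℚ _ using 2
      ring
    · simp [if_neg hj]

lemma dA_mB (j k : Fin g) :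
    (dA j * mB k + mB k * dA j : Module.End ℚ (XAlg g)) = 0 := by
  apply ext_bas (fun m => ?_)
  obtain ⟨ea, eb, A, B⟩ := m
  simp only [LinearMap.add_apply, Module.End.mul_apply, dA_bas, mB_bas, LinearMap.zero_apply]
  by_cases hk : k ∈ B
  · simp only [if_pos hk, map_zero, zero_add]
    by_cases hj : j ∈ A
    · simp [if_pos hj, hk]
    · simp [if_neg hj]
  · simp only [if_neg hk, map_smul, dA_bas]
    by_cases hj : j ∈ A
    · simp only [if_pos hj, map_smul, mB_bas, if_neg hk, smul_smul]
      rw [sgnB_erase_left A B hj k, ← add_smul]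
      convert zero_smul ℚ _ using 2
      ring
    · simp [if_neg hj]

lemma dA_dA (j k : Fin g) :
    (dA j * dA k + dA k * dA j : Module.End ℚ (XAlg g)) = 0 := by
  apply ext_bas (fun m => ?_)
  obtain ⟨ea, eb, A, B⟩ := m
  simp only [LinearMap.add_apply, Module.End.mul_apply, dA_bas, LinearMap.zero_apply]
  by_cases hjk : j = k
  · subst hjk
    by_cases hj : j ∈ A
    · simp [if_pos hj, Finset.notMem_erase]
    · simp [if_neg hj]
  · have hkj : k ≠ j := Ne.symm hjk
    by_cases hk : k ∈ A
    · by_cases hj : j ∈ A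
      · have h1 : j ∈ A.erase k := Finset.mem_erase.2 ⟨hjk, hj⟩
        have h2 : k ∈ A.erase j := Finset.mem_erase.2 ⟨hkj, hk⟩
        simp only [if_pos hk, if_pos hj, map_smul, dA_bas, if_pos h1, if_pos h2, smul_smul]
        rw [Finset.erase_right_comm (a := k) (b := j)]
        rw [sgnA_erase A hk hkj, sgnA_erase A hj hjk, ← add_smul, sgn_cross hjk, zero_smul]
      · have h1 : j ∉ A.erase k := fun hc => hj (Finset.mem_of_mem_erase hc)
        rw [if_pos hk, if_neg hj, map_zero, map_smul, dA_bas, if_neg h1, smul_zero, add_zero]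
    · by_cases hj : j ∈ A
      · have h2 : k ∉ A.erase j := fun hc => hk (Finset.mem_of_mem_erase hc)
        rw [if_neg hk, if_pos hj, map_zero, map_smul, dA_bas, if_neg h2, smul_zero, zero_add]
      · rw [if_neg hk, if_neg hj, map_zero, map_zero, add_zero]

lemma dB_dB (j k : Fin g) :
    (dB j * dB k + dB k * dB j : Module.End ℚ (XAlg g)) = 0 := by
  apply ext_bas (fun m => ?_)
  obtain ⟨ea, eb, A, B⟩ := m
  simp only [LinearMap.add_apply, Module.End.mul_apply, dB_bas, LinearMap.zero_apply]
  by_cases hjk : j = k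
  · subst hjk
    by_cases hj : j ∈ B
    · simp [if_pos hj, Finset.notMem_erase]
    · simp [if_neg hj]
  · have hkj : k ≠ j := Ne.symm hjk
    by_cases hk : k ∈ B
    · by_cases hj : j ∈ B
      · have h1 : j ∈ B.erase k := Finset.mem_erase.2 ⟨hjk, hj⟩
        have h2 : k ∈ B.erase j := Finset.mem_erase.2 ⟨hkj, hk⟩
        simp only [if_pos hk, if_pos hj, map_smul, dB_bas, if_pos h1, if_pos h2, smul_smul]
        rw [Finset.erase_right_comm (a := k) (b := j)]
        rw [sgnB_mul_sgnB, sgnB_mul_sgnB, sgnA_erase B hk hkj, sgnA_erase B hj hjk,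
          ← add_smul, sgn_cross hjk, zero_smul]
      · have h1 : j ∉ B.erase k := fun hc => hj (Finset.mem_of_mem_erase hc)
        rw [if_pos hk, if_neg hj, map_zero, map_smul, dB_bas, if_neg h1, smul_zero, add_zero]
    · by_cases hj : j ∈ B
      · have h2 : k ∉ B.erase j := fun hc => hk (Finset.mem_of_mem_erase hc)
        rw [if_neg hk, if_pos hj, map_zero, map_smul, dB_bas, if_neg h2, smul_zero, zero_add]
      · rw [if_neg hk, if_neg hj, map_zero, map_zero, add_zero]

lemma dA_dB (j k : Fin g) :
    (dA j * dB k + dB k * dA j : Module.End ℚ (XAlg g)) = 0 := by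
  apply ext_bas (fun m => ?_)
  obtain ⟨ea, eb, A, B⟩ := m
  simp only [LinearMap.add_apply, Module.End.mul_apply, dA_bas, dB_bas, LinearMap.zero_apply]
  by_cases hk : k ∈ B
  · by_cases hj : j ∈ A
    · rw [if_pos hk, if_pos hj, map_smul, map_smul, dA_bas, dB_bas]
      simp only [if_pos hk, if_pos hj, smul_smul]
      rw [sgnB_erase_left A B hj k, ← add_smul]
      convert zero_smul ℚ _ using 2
      ring
    · rw [if_pos hk, if_neg hj, map_zero, map_smul, dA_bas, if_neg hj, smul_zero, add_zero]
  · by_cases hj : j ∈ A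
    · rw [if_neg hk, if_pos hj, map_zero, map_smul, dB_bas, if_neg hk, smul_zero, zero_add]
    · rw [if_neg hk, if_neg hj, map_zero, map_zero, add_zero]

/-! ### Commutation of the even derivatives with the odd ones -/

lemma dA_dtA (j k : Fin g) :
    (dA j * dtA k : Module.End ℚ (XAlg g)) = dtA k * dA j := by
  apply ext_bas (fun m => ?_)
  obtain ⟨ea, eb, A, B⟩ := m
  simp only [Module.End.mul_apply, dA_bas, dtA_bas, map_smul]
  by_cases hj : j ∈ A
  · simp [if_pos hj, smul_smul, mul_comm]
  · simp [if_neg hj]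

lemma dB_dtA (j k : Fin g) :
    (dB j * dtA k : Module.End ℚ (XAlg g)) = dtA k * dB j := by
  apply ext_bas (fun m => ?_)
  obtain ⟨ea, eb, A, B⟩ := m
  simp only [Module.End.mul_apply, dB_bas, dtA_bas, map_smul]
  by_cases hj : j ∈ B
  · simp [if_pos hj, smul_smul, mul_comm]
  · simp [if_neg hj]

lemma dA_dtB (j k : Fin g) :
    (dA j * dtB k : Module.End ℚ (XAlg g)) = dtB k * dA j := by
  apply ext_bas (fun m => ?_)
  obtain ⟨ea, eb, A, B⟩ := m
  simp only [Module.End.mul_apply, dA_bas, dtB_bas, map_smul]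
  by_cases hj : j ∈ A
  · simp [if_pos hj, smul_smul, mul_comm]
  · simp [if_neg hj]

lemma dB_dtB (j k : Fin g) :
    (dB j * dtB k : Module.End ℚ (XAlg g)) = dtB k * dB j := by
  apply ext_bas (fun m => ?_)
  obtain ⟨ea, eb, A, B⟩ := m
  simp only [Module.End.mul_apply, dB_bas, dtB_bas, map_smul]
  by_cases hj : j ∈ B
  · simp [if_pos hj, smul_smul, mul_comm]
  · simp [if_neg hj]

end Mon

/-! ### Two abstract (noncommutative) ring identities -/

private lemma endCom {R : Type*} [Ring R] {x y u v p q e : R}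
    (r1 : u*x = e - x*u) (r2 : u*y = -(y*u)) (r3 : v*y = e - y*v) (r4 : v*x = -(x*v))
    (he : e*x = x*e)
    (c1 : p*x = x*p) (c2 : p*y = y*p) (c3 : q*x = x*q) (c4 : q*y = y*q) :
    (u*p + v*q)*(y*x) - (y*x)*(u*p + v*q) = x*(e*q) - y*(e*p) := by
  have hp : p*(y*x) = (y*x)*p := by
    rw [show p*(y*x) = (p*y)*x by noncomm_ring, c2, show (y*p)*x = y*(p*x) by noncomm_ring, c1]
    noncomm_ring
  have hq : q*(y*x) = (y*x)*q := by
    rw [show q*(y*x) = (q*y)*x by noncomm_ring, c4, show (y*q)*x = y*(q*x) by noncomm_ring, c3]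
    noncomm_ring
  have h1 : u*(y*x) = (y*x)*u - y*e := by
    rw [show u*(y*x) = (u*y)*x by noncomm_ring, r2,
      show (-(y*u))*x = -(y*(u*x)) by noncomm_ring, r1]
    noncomm_ring
  have h2 : v*(y*x) = (y*x)*v + e*x := by
    rw [show v*(y*x) = (v*y)*x by noncomm_ring, r3,
      show (e - y*v)*x = e*x - y*(v*x) by noncomm_ring, r4]
    noncomm_ring
  calc (u*p + v*q)*(y*x) - (y*x)*(u*p + v*q)
      = (u*(p*(y*x)) + v*(q*(y*x))) - (y*x)*(u*p + v*q) := by noncomm_ring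
    _ = (u*((y*x)*p) + v*((y*x)*q)) - (y*x)*(u*p + v*q) := by rw [hp, hq]
    _ = ((u*(y*x))*p + (v*(y*x))*q) - (y*x)*(u*p + v*q) := by noncomm_ring
    _ = (((y*x)*u - y*e)*p + ((y*x)*v + e*x)*q) - (y*x)*(u*p + v*q) := by rw [h1, h2]
    _ = (e*x)*q - y*(e*p) := by noncomm_ring
    _ = x*(e*q) - y*(e*p) := by rw [he]; noncomm_ring

private lemma endSwap {R : Type*} [Ring R] {x q y z : R}
    (h1 : x*y = -(y*x)) (h2 : x*z = -(z*x)) (c1 : q*y = y*q) (c2 : q*z = z*q) :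
    (x*q)*(y*z) = (y*z)*(x*q) := by
  calc (x*q)*(y*z) = x*((q*y)*z) := by noncomm_ring
    _ = x*((y*q)*z) := by rw [c1]
    _ = x*(y*(q*z)) := by noncomm_ring
    _ = x*(y*(z*q)) := by rw [c2]
    _ = ((x*y)*z)*q := by noncomm_ring
    _ = ((-(y*x))*z)*q := by rw [h1]
    _ = -((y*(x*z))*q) := by noncomm_ring
    _ = -((y*(-(z*x)))*q) := by rw [h2]
    _ = (y*z)*(x*q) := by noncomm_ring

namespace Mon
variable {g : ℕ}

/-! ### Assembly -/

lemma pair1 (j k : Fin g) :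
    (mA k * dtA k + mB k * dtB k) * (dB j * dA j)
      - (dB j * dA j) * (mA k * dtA k + mB k * dtB k)
      = if j = k then (dA j * dtB j - dB j * dtA j : Module.End ℚ (XAlg g)) else 0 := by
  set e : Module.End ℚ (XAlg g) := if j = k then 1 else 0 with he_def
  have he : e * dA j = dA j * e := by
    rw [he_def]; split_ifs <;> simp
  have key := endCom (x := dA j) (y := dB j) (u := mA k) (v := mB k)
      (p := dtA k) (q := dtB k) (e := e)
      (eq_sub_of_add_eq' (dA_mA j k)) (eq_neg_of_add_eq_zero_right (dB_mA j k))
      (eq_sub_of_add_eq' (dB_mB j k)) (eq_neg_of_add_eq_zero_right (dA_mB j k))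
      he
      (dA_dtA j k).symm (dB_dtA j k).symm (dA_dtB j k).symm (dB_dtB j k).symm
  rw [key, he_def]
  split_ifs with h
  · subst h; simp
  · simp

lemma part1 (g : ℕ) :
    (hop g * Δop g - Δop g * hop g : Module.End ℚ (XAlg g))
      = ∑ j : Fin g, (dA j * dtB j - dB j * dtA j) := by
  have hh : hop g = ∑ k : Fin g, (mA k * dtA k + mB k * dtB k) := by
    simp only [hop, Module.End.mul_eq_comp]
  have hd : Δop g = ∑ j : Fin g, (dB j * dA j : Module.End ℚ (XAlg g)) := by
    simp only [Δop, Module.End.mul_eq_comp]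
  rw [hh, hd, Finset.sum_mul_sum, Finset.sum_mul_sum]
  rw [Finset.sum_comm]
  rw [← Finset.sum_sub_distrib]
  calc ∑ j : Fin g, (∑ k : Fin g, (mA k * dtA k + mB k * dtB k) * (dB j * dA j)
        - ∑ k : Fin g, (dB j * dA j) * (mA k * dtA k + mB k * dtB k))
      = ∑ j : Fin g, ∑ k : Fin g, ((mA k * dtA k + mB k * dtB k) * (dB j * dA j)
        - (dB j * dA j) * (mA k * dtA k + mB k * dtB k)) := by
        refine Finset.sum_congr rfl (fun j _ => ?_)
        rw [← Finset.sum_sub_distrib]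
    _ = ∑ j : Fin g, ∑ k : Fin g,
          (if j = k then (dA j * dtB j - dB j * dtA j : Module.End ℚ (XAlg g)) else 0) := by
        refine Finset.sum_congr rfl (fun j _ => Finset.sum_congr rfl (fun k _ => pair1 j k))
    _ = ∑ j : Fin g, (dA j * dtB j - dB j * dtA j) := by
        refine Finset.sum_congr rfl (fun j _ => ?_)
        rw [Finset.sum_ite_eq]
        simp

lemma pair2 (j k : Fin g) :
    ((dA j * dtB j - dB j * dtA j) * (dB k * dA k) : Module.End ℚ (XAlg g))
      = (dB k * dA k) * (dA j * dtB j - dB j * dtA j) := by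
  rw [sub_mul, mul_sub]
  rw [endSwap (eq_neg_of_add_eq_zero_left (dA_dB j k)) (eq_neg_of_add_eq_zero_left (dA_dA j k))
    ((dB_dtB k j).symm) ((dA_dtB k j).symm)]
  rw [endSwap (eq_neg_of_add_eq_zero_left (dB_dB j k)) (eq_neg_of_add_eq_zero_right (dA_dB k j))
    ((dB_dtA k j).symm) ((dA_dtA k j).symm)]

lemma part2 (g : ℕ) :
    ((∑ j : Fin g, (dA j * dtB j - dB j * dtA j)) * Δop g : Module.End ℚ (XAlg g))
      = Δop g * ∑ j : Fin g, (dA j * dtB j - dB j * dtA j) := by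
  have hd : Δop g = ∑ k : Fin g, (dB k * dA k : Module.End ℚ (XAlg g)) := by
    simp only [Δop, Module.End.mul_eq_comp]
  rw [hd, Finset.sum_mul_sum, Finset.sum_mul_sum, Finset.sum_comm]
  exact Finset.sum_congr rfl (fun k _ => Finset.sum_congr rfl (fun j _ => pair2 j k))

end Mon

open Mon in
/-- On `X = ℚ[ã_i, b̃_i] ⊗ Λ[a_i, b_i]`, the commutator of `h` and `Δ` equals
`Σ_j (∂_{a_j} ∂_{b̃_j} − ∂_{b_j} ∂_{ã_j})`, and consequently `[[h,Δ],Δ] = 0`, i.e.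
`Δ h Δ = ½ (Δ² h + h Δ²)`. -/
theorem h_Delta_commutator (g : ℕ) :
    hop g ∘ₗ Δop g - Δop g ∘ₗ hop g
      = ∑ j : Fin g, (dA j ∘ₗ dtB j - dB j ∘ₗ dtA j) ∧
    Δop g ∘ₗ hop g ∘ₗ Δop g
      = (1 / 2 : ℚ) • (Δop g ∘ₗ Δop g ∘ₗ hop g + hop g ∘ₗ Δop g ∘ₗ Δop g) := by
  
  have p1 : (hop g * Δop g - Δop g * hop g : Module.End ℚ (XAlg g))
      = ∑ j : Fin g, (dA j * dtB j - dB j * dtA j) := part1 g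
  constructor
  · simpa only [Module.End.mul_eq_comp] using p1
  · have ec : (hop g * Δop g - Δop g * hop g) * Δop g
        = Δop g * (hop g * Δop g - Δop g * hop g) := by
      rw [p1]; exact part2 g
    have e3 : (hop g * (Δop g * Δop g) : Module.End ℚ (XAlg g))
        = (hop g * Δop g - Δop g * hop g) * Δop g + Δop g * (hop g * Δop g) := by
      rw [sub_mul, ← mul_assoc (hop g), mul_assoc (Δop g) (hop g) (Δop g)]
      abel
    have S : (Δop g * (Δop g * hop g) + hop g * (Δop g * Δop g) : Module.End ℚ (XAlg g))
        = (2:ℚ) • (Δop g * (hop g * Δop g)) := by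
      calc Δop g * (Δop g * hop g) + hop g * (Δop g * Δop g)
          = Δop g * (Δop g * hop g)
            + ((hop g * Δop g - Δop g * hop g) * Δop g + Δop g * (hop g * Δop g)) := by
            rw [e3]
        _ = Δop g * (Δop g * hop g)
            + (Δop g * (hop g * Δop g - Δop g * hop g) + Δop g * (hop g * Δop g)) := by
            rw [ec]
        _ = (2:ℚ) • (Δop g * (hop g * Δop g)) := by
            rw [mul_sub, two_smul]
            abel
    have goal2 : (Δop g * (hop g * Δop g) : Module.End ℚ (XAlg g))
        = (1 / 2 : ℚ) • (Δop g * (Δop g * hop g) + hop g * (Δop g * Δop g)) := by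
      rw [S, smul_smul]
      norm_num
    simpa only [Module.End.mul_eq_comp] using goal2
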